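/- (Birkhoff–von Neumann, Hermitian case.) Suppose K has characteristic different from 2, E has dimension at least 3 over K (infinite dimension allowed), ⊥ is a polarity on E, and there exists e ∈ E with e ∉ (Ke)^⊥. Then there exist an involution ρ ↦ ρ* on K (an additive map with (ρσ)* = σ*ρ* and ρ** = ρ) and a form ⟨·,·⟩ : E × E → K which is additive in each variable, satisfies ⟨ρx, y⟩ = ρ⟨x, y⟩, ⟨x, ρy⟩ = ⟨x, y⟩ρ*, and ⟨x, y⟩* = ⟨y, x⟩ for all ρ ∈ K and x, y ∈ E, and is nondegenerate (⟨a, x⟩ = 0 for all x implies a = 0), such that for every subspace M of E, M^⊥ = {x ∈ E : ⟨x, m⟩ = 0 for all m ∈ M}. -/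

import Mathlib

/-- A polarity on a left vector space `E` over a division ring `K`: an
inclusion-reversing map on subspaces with `E^⊥ = 0` such that the perp of every
line `Kx` (`x ≠ 0`) is a hyperplane and `(Kx)^⊥⊥ = Kx`. -/
structure Polarity (K E : Type*) [DivisionRing K] [AddCommGroup E] [Module K E] where
  perp : Submodule K E → Submodule K E
  perp_top : perp ⊤ = ⊥
  perp_antitone : ∀ {L M : Submodule K E}, L ≤ M → perp M ≤ perp L
  line_perp_ne_top : ∀ x : E, x ≠ 0 → perp (Submodule.span K {x}) ≠ ⊤
  line_perp_hyperplane :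
    ∀ x : E, x ≠ 0 → ∃ v : E, perp (Submodule.span K {x}) ⊔ Submodule.span K {v} = ⊤
  line_biperp : ∀ x : E, x ≠ 0 →
    perp (perp (Submodule.span K {x})) = Submodule.span K {x}

namespace BvN
open Submodule

variable {K E : Type*} [DivisionRing K] [AddCommGroup E] [Module K E]

/-- perp of the line through `x`. -/
def lp (p : Polarity K E) (x : E) : Submodule K E := p.perp (Submodule.span K {x})

variable (p : Polarity K E)

theorem lp_ne_top {x : E} (hx : x ≠ 0) : lp p x ≠ ⊤ := p.line_perp_ne_top x hx

theorem sup_line_eq_top {x a : E} (hx : x ≠ 0) (ha : a ∉ lp p x) :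
    lp p x ⊔ Submodule.span K {a} = ⊤ := by
  obtain ⟨v, hv⟩ := p.line_perp_hyperplane x hx
  -- a = h + ρ v with ρ ≠ 0
  have hmem : a ∈ lp p x ⊔ Submodule.span K {v} := by simp only [lp]; rw [hv]; trivial
  rw [Submodule.mem_sup] at hmem
  obtain ⟨h, hh, z, hz, hsum⟩ := hmem
  rw [Submodule.mem_span_singleton] at hz
  obtain ⟨ρ, rfl⟩ := hz
  have hρ : ρ ≠ 0 := by
    rintro rfl
    simp only [zero_smul, add_zero] at hsum
    exact ha (hsum ▸ hh)
  have hvmem : v ∈ lp p x ⊔ Submodule.span K {a} := by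
    have : ρ • v = a - h := by rw [← hsum]; abel
    have hv' : v = ρ⁻¹ • a - ρ⁻¹ • h := by
      rw [← smul_sub, ← this, smul_smul, inv_mul_cancel₀ hρ, one_smul]
    rw [hv']
    exact Submodule.sub_mem _
      (Submodule.mem_sup_right (Submodule.smul_mem _ _ (Submodule.mem_span_singleton_self a)))
      (Submodule.mem_sup_left (Submodule.smul_mem _ _ hh))
  apply top_unique
  rw [← hv]
  apply sup_le (le_sup_left)
  rw [Submodule.span_singleton_le_iff_mem]
  exact hvmem

theorem disjoint_line {x a : E} (ha : a ∉ lp p x) :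
    Disjoint (lp p x) (Submodule.span K {a}) := by
  rw [Submodule.disjoint_def]
  intro z hz hz'
  rw [Submodule.mem_span_singleton] at hz'
  obtain ⟨ρ, rfl⟩ := hz'
  rcases eq_or_ne ρ 0 with rfl | hρ
  · simp
  · exact absurd ((Submodule.smul_mem_iff _ hρ).mp hz) ha

theorem isCompl_line {x a : E} (hx : x ≠ 0) (ha : a ∉ lp p x) :
    IsCompl (lp p x) (Submodule.span K {a}) :=
  ⟨disjoint_line p ha, codisjoint_iff.mpr (sup_line_eq_top p hx ha)⟩

/-- operational coatom property -/
theorem lp_coatom {x : E} (hx : x ≠ 0) {M : Submodule K E} (hM : lp p x ≤ M) (hne : M ≠ lp p x) :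
    M = ⊤ := by
  have : ∃ a, a ∈ M ∧ a ∉ lp p x := by
    by_contra h
    push_neg at h
    exact hne (le_antisymm (fun z hz => h z hz) hM)
  obtain ⟨a, haM, ha⟩ := this
  apply top_unique
  rw [← sup_line_eq_top p hx ha]
  apply sup_le hM
  rwa [Submodule.span_singleton_le_iff_mem]

theorem lp_le_lp {x y : E} (hx : x ≠ 0) (hy : y ≠ 0) (h : lp p x ≤ lp p y) :
    y ∈ Submodule.span K {x} := by
  have := p.perp_antitone h
  rw [lp, lp, p.line_biperp x hx, p.line_biperp y hy] at this
  exact this (Submodule.mem_span_singleton_self y)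

theorem span_singleton_smul {x : E} {ρ : K} (hρ : ρ ≠ 0) :
    Submodule.span K {ρ • x} = Submodule.span K {x} := by
  apply le_antisymm
  · rw [Submodule.span_singleton_le_iff_mem]
    exact Submodule.smul_mem _ _ (Submodule.mem_span_singleton_self x)
  · rw [Submodule.span_singleton_le_iff_mem, Submodule.mem_span_singleton]
    exact ⟨ρ⁻¹, by rw [smul_smul, inv_mul_cancel₀ hρ, one_smul]⟩

theorem lp_smul {x : E} {ρ : K} (hρ : ρ ≠ 0) : lp p (ρ • x) = lp p x := by
  simp only [lp, span_singleton_smul hρ]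

theorem lp_eq_lp {x y : E} (hx : x ≠ 0) (hy : y ≠ 0) (h : lp p x ≤ lp p y) :
    lp p x = lp p y := by
  have hyx := lp_le_lp p hx hy h
  rw [Submodule.mem_span_singleton] at hyx
  obtain ⟨ρ, rfl⟩ := hyx
  have hρ : ρ ≠ 0 := by rintro rfl; simp at hy
  rw [lp_smul p hρ]


theorem exists_not_mem {H : Submodule K E} (h : H ≠ ⊤) : ∃ a, a ∉ H := by
  by_contra hc; push_neg at hc; exact h (Submodule.eq_top_iff'.mpr hc)

theorem ne_zero_of_not_mem {H : Submodule K E} {a : E} (h : a ∉ H) : a ≠ 0 := by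
  rintro rfl; exact h (zero_mem H)

theorem rank_line {a : E} (ha : a ≠ 0) : Module.rank K (Submodule.span K {a}) = 1 := by
  rw [rank_span_set (LinearIndependent.of_subsingleton (⟨a, rfl⟩ : ({a} : Set E)) ha)]; simp

theorem isCompl_rank_contra {H1 H2 : Submodule K E} {a b : E}
    (h1 : IsCompl H1 (Submodule.span K {a})) (h2 : IsCompl H2 (Submodule.span K {b}))
    (hd : H1 ⊓ H2 = ⊥) (ha : a ≠ 0) (hb : b ≠ 0) (hdim : 3 ≤ Module.rank K E) : False := by
  have e1 : Module.rank K E = Module.rank K H1 + Module.rank K (Submodule.span K {a}) := by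
    rw [← (Submodule.prodEquivOfIsCompl H1 _ h1).rank_eq, rank_prod]
    simp
  have hinj : Function.Injective ⇑((H2.mkQ).comp H1.subtype) := by
    rw [← LinearMap.ker_eq_bot]
    apply Submodule.eq_bot_iff _ |>.mpr
    rintro ⟨z, hz⟩ hker
    simp only [LinearMap.mem_ker, LinearMap.comp_apply, Submodule.subtype_apply,
      Submodule.mkQ_apply, Submodule.Quotient.mk_eq_zero] at hker
    have : z ∈ H1 ⊓ H2 := ⟨hz, hker⟩
    rw [hd] at this
    simpa using this
  have h21 : Module.rank K H1 ≤ 1 := by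
    calc Module.rank K H1 ≤ Module.rank K (E ⧸ H2) :=
          LinearMap.rank_le_of_injective _ hinj
      _ = Module.rank K (Submodule.span K {b}) := (Submodule.quotientEquivOfIsCompl _ _ h2).rank_eq
      _ = 1 := rank_line hb
  have : Module.rank K E ≤ 2 := by
    rw [e1, rank_line ha]
    calc Module.rank K H1 + 1 ≤ 1 + 1 := by gcongr
      _ = 2 := one_add_one_eq_two
  have := hdim.trans this
  norm_num at this

/-- intersection of two line-perps is nonzero (dim ≥ 3). -/
theorem inf_lp_ne_bot {x y : E} (hx : x ≠ 0) (hy : y ≠ 0) (hdim : 3 ≤ Module.rank K E) :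
    ∃ w, w ∈ lp p x ⊓ lp p y ∧ w ≠ 0 := by
  by_contra hc
  push_neg at hc
  have hd : lp p x ⊓ lp p y = ⊥ := by
    apply Submodule.eq_bot_iff _ |>.mpr
    intro z hz
    exact hc z hz
  obtain ⟨a, ha⟩ := exists_not_mem (lp_ne_top p hx)
  obtain ⟨b, hb⟩ := exists_not_mem (lp_ne_top p hy)
  exact isCompl_rank_contra (isCompl_line p hx ha) (isCompl_line p hy hb) hd
    (ne_zero_of_not_mem ha) (ne_zero_of_not_mem hb) hdim

theorem span_singleton_ne_top {a : E} (hdim : 3 ≤ Module.rank K E) :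
    Submodule.span K {a} ≠ ⊤ := by
  intro h
  have h1 := rank_span_le (R := K) ({a} : Set E)
  rw [h, rank_top] at h1
  simp only [Cardinal.mk_fintype, Fintype.card_unique, Nat.cast_one] at h1
  have := hdim.trans h1
  norm_num at this

theorem lp_zero (hdim : 3 ≤ Module.rank K E) {e : E} (he0 : e ≠ 0) : lp p 0 = ⊤ := by
  obtain ⟨z, hz⟩ := exists_not_mem (span_singleton_ne_top (a := e) hdim)
  have hz0 : z ≠ 0 := by rintro rfl; exact hz (zero_mem _)
  have hne : lp p z ≠ lp p e := by
    intro h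
    have h1 := lp_le_lp p hz0 he0 (le_of_eq h)
    have h2 := lp_le_lp p he0 hz0 (le_of_eq h.symm)
    rw [Submodule.mem_span_singleton] at h1 h2
    obtain ⟨ρ, hρ⟩ := h2
    exact hz (Submodule.mem_span_singleton.mpr ⟨ρ, hρ⟩)
  have hsup : lp p e ⊔ lp p z = ⊤ := by
    apply lp_coatom p he0 le_sup_left
    intro h
    have : lp p z ≤ lp p e := by rw [← h]; exact le_sup_right
    exact hne (lp_eq_lp p hz0 he0 this)
  have h1 : lp p e ≤ lp p 0 := by
    simp only [lp, Submodule.span_zero_singleton]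
    exact p.perp_antitone bot_le
  have h2 : lp p z ≤ lp p 0 := by
    simp only [lp, Submodule.span_zero_singleton]
    exact p.perp_antitone bot_le
  rw [← top_le_iff, ← hsup]
  exact sup_le h1 h2

/-- symmetry of the orthogonality relation. -/
theorem lp_symm (hdim : 3 ≤ Module.rank K E) {e : E} (he0 : e ≠ 0) {x y : E}
    (h : y ∈ lp p x) : x ∈ lp p y := by
  rcases eq_or_ne y 0 with rfl | hy0
  · rw [lp_zero p hdim he0]; trivial
  rcases eq_or_ne x 0 with rfl | hx0
  · exact zero_mem _
  have h1 : Submodule.span K {y} ≤ lp p x := by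
    rwa [Submodule.span_singleton_le_iff_mem]
  have h2 := p.perp_antitone h1
  have h3 : x ∈ p.perp (lp p x) := by
    rw [lp, p.line_biperp x hx0]
    exact Submodule.mem_span_singleton_self x
  exact h2 h3


theorem functional_ext {H : Submodule K E} {a : E} (hsup : H ⊔ Submodule.span K {a} = ⊤)
    {g1 g2 : E →ₗ[K] K} (hH : ∀ z ∈ H, g1 z = g2 z) (haa : g1 a = g2 a) : g1 = g2 := by
  apply LinearMap.ext
  intro z
  have hz : z ∈ H ⊔ Submodule.span K {a} := by rw [hsup]; trivial
  rw [Submodule.mem_sup] at hz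
  obtain ⟨h, hh, w, hw, rfl⟩ := hz
  rw [Submodule.mem_span_singleton] at hw
  obtain ⟨ρ, rfl⟩ := hw
  simp [map_add, map_smul, hH h hh, haa]

noncomputable def coordOn (H : Submodule K E) (a : E) (ha : a ≠ 0)
    (h : IsCompl (Submodule.span K {a}) H) : E →ₗ[K] K :=
  (LinearEquiv.toSpanNonzeroSingleton K E a ha).symm.toLinearMap ∘ₗ
    Submodule.linearProjOfIsCompl (Submodule.span K {a}) H h

theorem coordOn_smul_eq (H : Submodule K E) (a : E) (ha : a ≠ 0)
    (h : IsCompl (Submodule.span K {a}) H) (z : E) :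
    (coordOn H a ha h z) • a =
      ((Submodule.linearProjOfIsCompl (Submodule.span K {a}) H h) z : E) := by
  set w := (Submodule.linearProjOfIsCompl (Submodule.span K {a}) H h) z with hw
  have : (LinearEquiv.toSpanNonzeroSingleton K E a ha) (coordOn H a ha h z) = w := by
    simp [coordOn]
    exact hw.symm
  rw [LinearEquiv.toSpanNonzeroSingleton_apply] at this
  exact congrArg Subtype.val this

theorem coordOn_decomp (H : Submodule K E) (a : E) (ha : a ≠ 0)
    (h : IsCompl (Submodule.span K {a}) H) (z : E) :
    z - (coordOn H a ha h z) • a ∈ H := by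
  rw [coordOn_smul_eq]
  have hker : (Submodule.linearProjOfIsCompl (Submodule.span K {a}) H h)
      (z - ((Submodule.linearProjOfIsCompl (Submodule.span K {a}) H h) z : E)) = 0 := by
    rw [map_sub]
    erw [Submodule.linearProjOfIsCompl_apply_left h]
    simp
  have : z - ((Submodule.linearProjOfIsCompl (Submodule.span K {a}) H h) z : E) ∈
      LinearMap.ker (Submodule.linearProjOfIsCompl (Submodule.span K {a}) H h) := hker
  erw [Submodule.linearProjOfIsCompl_ker] at this
  exact this

theorem coordOn_mem (H : Submodule K E) (a : E) (ha : a ≠ 0)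
    (h : IsCompl (Submodule.span K {a}) H) {z : E} (hz : z ∈ H) :
    coordOn H a ha h z = 0 := by
  have h0 : (Submodule.linearProjOfIsCompl (Submodule.span K {a}) H h) z = 0 :=
    Submodule.linearProjOfIsCompl_apply_right h ⟨z, hz⟩
  have := coordOn_smul_eq H a ha h z
  rw [h0] at this
  simpa [smul_eq_zero, ha] using this

theorem coordOn_self (H : Submodule K E) (a : E) (ha : a ≠ 0)
    (h : IsCompl (Submodule.span K {a}) H) :
    coordOn H a ha h a = 1 := by
  have h1 : (Submodule.linearProjOfIsCompl (Submodule.span K {a}) H h) a =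
      ⟨a, Submodule.mem_span_singleton_self a⟩ :=
    Submodule.linearProjOfIsCompl_apply_left h ⟨a, Submodule.mem_span_singleton_self a⟩
  have := coordOn_smul_eq H a ha h a
  rw [h1] at this
  have heq : (coordOn H a ha h a) • a = (1 : K) • a := by simpa using this
  have h2 : (coordOn H a ha h a - 1) • a = 0 := by
    rw [sub_smul, heq, one_smul, sub_self]
  rcases smul_eq_zero.mp h2 with h' | h'
  · exact sub_eq_zero.mp h'
  · exact absurd h' ha

open Classical in
/-- The normalized functional attached to line `Kx`: kernel `lp p x`, value 1 at `a`. -/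
noncomputable def pc (p : Polarity K E) (x a : E) : E →ₗ[K] K :=
  if h : x ≠ 0 ∧ a ∉ lp p x then
    coordOn (lp p x) a (ne_zero_of_not_mem h.2) ((isCompl_line p h.1 h.2).symm)
  else 0

variable {p}

theorem pc_self {x a : E} (hx : x ≠ 0) (ha : a ∉ lp p x) : pc p x a a = 1 := by
  rw [pc, dif_pos ⟨hx, ha⟩]
  exact coordOn_self _ _ _ _

theorem pc_mem {x a : E} (hx : x ≠ 0) (ha : a ∉ lp p x) {z : E} (hz : z ∈ lp p x) :
    pc p x a z = 0 := by
  rw [pc, dif_pos ⟨hx, ha⟩]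
  exact coordOn_mem _ _ _ _ hz

theorem pc_decomp {x a : E} (hx : x ≠ 0) (ha : a ∉ lp p x) (z : E) :
    z - (pc p x a z) • a ∈ lp p x := by
  rw [pc, dif_pos ⟨hx, ha⟩]
  exact coordOn_decomp _ _ _ _ z

theorem pc_zero_iff {x a : E} (hx : x ≠ 0) (ha : a ∉ lp p x) {z : E} :
    pc p x a z = 0 ↔ z ∈ lp p x := by
  constructor
  · intro h
    have := pc_decomp hx ha z (p := p)
    rwa [h, zero_smul, sub_zero] at this
  · exact pc_mem hx ha

theorem pc_eq {x a : E} (hx : x ≠ 0) (ha : a ∉ lp p x) {z h : E} {ρ : K}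
    (hh : h ∈ lp p x) (hz : z = h + ρ • a) : pc p x a z = ρ := by
  subst hz
  rw [map_add, map_smul, pc_mem hx ha hh, pc_self hx ha, smul_eq_mul, mul_one, zero_add]

end BvN

namespace BvN
open Submodule

variable {K E : Type*} [DivisionRing K] [AddCommGroup E] [Module K E]
variable {p : Polarity K E} {e : E}

theorem he0 (he : e ∉ lp p e) : e ≠ 0 := ne_zero_of_not_mem he

theorem c_e (he : e ∉ lp p e) : pc p e e e = 1 := pc_self (he0 he) he

theorem c_zero_iff (he : e ∉ lp p e) {z : E} : pc p e e z = 0 ↔ z ∈ lp p e :=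
  pc_zero_iff (he0 he) he

theorem chart_ne_zero {y : E} (hy : pc p e e y = 1) : y ≠ 0 := by
  rintro rfl; rw [map_zero] at hy; exact one_ne_zero hy.symm

theorem chart_not_mem (he : e ∉ lp p e) {y : E} (hy : pc p e e y = 1) : y ∉ lp p e := by
  intro h
  rw [pc_mem (he0 he) he h] at hy
  exact one_ne_zero hy.symm

theorem e_not_mem_lp (hdim : 3 ≤ Module.rank K E) (he : e ∉ lp p e) {y : E}
    (hy : pc p e e y = 1) : e ∉ lp p y := by
  intro h
  exact chart_not_mem he hy (lp_symm p hdim (he0 he) h)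

theorem f_at_e (hdim : 3 ≤ Module.rank K E) (he : e ∉ lp p e) {y : E}
    (hy : pc p e e y = 1) : pc p y e e = 1 :=
  pc_self (chart_ne_zero hy) (e_not_mem_lp hdim he hy)

theorem f_zero_iff (hdim : 3 ≤ Module.rank K E) (he : e ∉ lp p e) {y : E}
    (hy : pc p e e y = 1) {z : E} : pc p y e z = 0 ↔ z ∈ lp p y :=
  pc_zero_iff (chart_ne_zero hy) (e_not_mem_lp hdim he hy)

theorem f_mem (hdim : 3 ≤ Module.rank K E) (he : e ∉ lp p e) {y : E}
    (hy : pc p e e y = 1) {z : E} (hz : z ∈ lp p y) : pc p y e z = 0 :=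
  (f_zero_iff hdim he hy).mpr hz

/-- Key Lemma: perturbation by `w ∈ e^⊥ ∩ y^⊥` does not change `f_x(y)`. -/
theorem keyL (hdim : 3 ≤ Module.rank K E) (he : e ∉ lp p e) {x y w : E}
    (hx : pc p e e x = 1) (hy : pc p e e y = 1)
    (hwe : w ∈ lp p e) (hwy : w ∈ lp p y) :
    pc p (x + w) e y = pc p x e y := by
  set μ := pc p x e y with hμ
  have hxw : pc p e e (x + w) = 1 := by
    rw [map_add, (c_zero_iff he).mpr hwe, add_zero, hx]
  have hym : y - μ • e ∈ lp p x := by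
    rw [← f_zero_iff hdim he hx, map_sub, map_smul, f_at_e hdim he hx, smul_eq_mul,
      mul_one, ← hμ, sub_self]
  have hx1 : x ∈ lp p (y - μ • e) := lp_symm p hdim (he0 he) hym
  have hw1 : w ∈ lp p (y - μ • e) := by
    have h1 : y ∈ lp p w := lp_symm p hdim (he0 he) hwy
    have h2 : e ∈ lp p w := lp_symm p hdim (he0 he) hwe
    exact lp_symm p hdim (he0 he) (sub_mem h1 (smul_mem _ _ h2))
  have hxw1 : y - μ • e ∈ lp p (x + w) := lp_symm p hdim (he0 he) (add_mem hx1 hw1)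
  have h0 : pc p (x + w) e (y - μ • e) = 0 := f_mem hdim he hxw hxw1
  rw [map_sub, map_smul, f_at_e hdim he hxw, smul_eq_mul, mul_one] at h0
  exact sub_eq_zero.mp h0

/-- Lemma R: if `f_y(x) = f_{y'}(x)` for charts, then `f_x(y) = f_x(y')`. -/
theorem lemR (hdim : 3 ≤ Module.rank K E) (he : e ∉ lp p e) {x y y' : E}
    (hx : pc p e e x = 1) (hy : pc p e e y = 1)
    (hy' : pc p e e y' = 1) (h : pc p y e x = pc p y' e x) :
    pc p x e y = pc p x e y' := by
  set μ := pc p y e x with hμ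
  have hxm : x - μ • e ∈ lp p y := by
    rw [← f_zero_iff hdim he hy, map_sub, map_smul, f_at_e hdim he hy, smul_eq_mul,
      mul_one, ← hμ, sub_self]
  have hxm' : x - μ • e ∈ lp p y' := by
    rw [← f_zero_iff hdim he hy', map_sub, map_smul, f_at_e hdim he hy', smul_eq_mul,
      mul_one]
    rw [hμ] at h
    rw [← h, sub_self]
  have h1 : y ∈ lp p (x - μ • e) := lp_symm p hdim (he0 he) hxm
  have h2 : y' ∈ lp p (x - μ • e) := lp_symm p hdim (he0 he) hxm'
  have h3 : y' - y ∈ lp p (x - μ • e) := sub_mem h2 h1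
  have hwe : y' - y ∈ lp p e := by
    rw [← c_zero_iff he, map_sub, hy, hy', sub_self]
  have h4 : x - μ • e ∈ lp p (y' - y) := lp_symm p hdim (he0 he) h3
  have h5 : e ∈ lp p (y' - y) := lp_symm p hdim (he0 he) hwe
  have h6 : x ∈ lp p (y' - y) := by
    have := add_mem h4 (smul_mem (lp p (y' - y)) μ h5)
    simpa using this
  have h7 : y' - y ∈ lp p x := lp_symm p hdim (he0 he) h6
  have h8 : pc p x e (y' - y) = 0 := f_mem hdim he hx h7
  rw [map_sub] at h8
  exact (sub_eq_zero.mp h8).symm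

/-- Same-`y` well-definedness. -/
theorem sameY (hdim : 3 ≤ Module.rank K E) (he : e ∉ lp p e) {x x' y : E}
    (hx : pc p e e x = 1) (hx' : pc p e e x' = 1)
    (hy : pc p e e y = 1) (h : pc p y e x = pc p y e x') :
    pc p x e y = pc p x' e y := by
  have hwe : x' - x ∈ lp p e := by
    rw [← c_zero_iff he, map_sub, hx, hx', sub_self]
  have hwy : x' - x ∈ lp p y := by
    rw [← f_zero_iff hdim he hy, map_sub, ← h, sub_self]
  have h2 := keyL hdim he hx hy hwe hwy
  rw [add_sub_cancel] at h2
  exact h2.symm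

theorem lp_inj {x y : E} (hx : x ≠ 0) (hy : y ≠ 0)
    (hne : Submodule.span K {x} ≠ Submodule.span K {y}) : lp p x ≠ lp p y := by
  intro h
  apply hne
  have h1 := lp_le_lp p hx hy (le_of_eq h)
  have h2 := lp_le_lp p hy hx (le_of_eq h.symm)
  exact le_antisymm ((Submodule.span_singleton_le_iff_mem _ _).mpr h2)
    ((Submodule.span_singleton_le_iff_mem _ _).mpr h1)

theorem exists_mem_lp_not_mem {x y : E} (hx : x ≠ 0) (hy : y ≠ 0)
    (hne : lp p x ≠ lp p y) : ∃ u, u ∈ lp p x ∧ u ∉ lp p y := by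
  by_contra hc
  push_neg at hc
  exact hne (lp_eq_lp p hx hy hc)

/-- distinct chart points have distinct line-perps. -/
theorem lp_ne_of_chart (he : e ∉ lp p e) {y : E} (hy : pc p e e y = 1) (hne : y ≠ e) :
    lp p y ≠ lp p e := by
  apply lp_inj (chart_ne_zero hy) (he0 he)
  intro h
  have h2 : y ∈ Submodule.span K {e} := h ▸ Submodule.mem_span_singleton_self y
  rw [Submodule.mem_span_singleton] at h2
  obtain ⟨ρ, hρ⟩ := h2
  rw [← hρ, map_smul, c_e he, smul_eq_mul, mul_one] at hy
  exact hne (by rw [← hρ, hy, one_smul])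

/-- a vector in `e^⊥` not orthogonal to chart point `y ≠ e`. -/
theorem exists_u (he : e ∉ lp p e) {y : E} (hy : pc p e e y = 1) (hne : y ≠ e) :
    ∃ u, u ∈ lp p e ∧ u ∉ lp p y :=
  exists_mem_lp_not_mem (he0 he) (chart_ne_zero hy) (lp_ne_of_chart he hy hne).symm

/-- solvability: for chart `y ≠ e` every value is attained by `f_y` on the chart. -/
theorem exists_chart_val (hdim : 3 ≤ Module.rank K E) (he : e ∉ lp p e) {y : E}
    (hy : pc p e e y = 1) (hne : y ≠ e) (μ : K) :
    ∃ x, pc p e e x = 1 ∧ pc p y e x = μ := by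
  obtain ⟨u, hue, huy⟩ := exists_u he hy hne
  have hq : pc p y e u ≠ 0 := fun h => huy ((f_zero_iff hdim he hy).mp h)
  refine ⟨e + ((μ - 1) * (pc p y e u)⁻¹) • u, ?_, ?_⟩
  · rw [map_add, map_smul, c_e he, (c_zero_iff he).mpr hue, smul_zero, add_zero]
  · rw [map_add, map_smul, f_at_e hdim he hy, smul_eq_mul, mul_assoc,
      inv_mul_cancel₀ hq, mul_one]
    abel

end BvN

namespace BvN
open Submodule

variable {K E : Type*} [DivisionRing K] [AddCommGroup E] [Module K E]
variable {p : Polarity K E} {e : E}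

/-- exists chart point outside a line-perp `lp p w`, `w ∈ e^⊥ \ {0}`. -/
theorem exists_chart_not_mem (he : e ∉ lp p e) {w : E} (hwe : w ∈ lp p e) (hw0 : w ≠ 0) :
    ∃ a, pc p e e a = 1 ∧ a ∉ lp p w := by
  by_contra hc
  push_neg at hc
  have heM : e ∈ lp p w := hc e (c_e he)
  have hsub : lp p e ≤ lp p w := by
    intro s hs
    have h1 : pc p e e (e + s) = 1 := by
      rw [map_add, c_e he, (c_zero_iff he).mpr hs, add_zero]
    have := hc _ h1
    have h2 : (e + s) - e ∈ lp p w := sub_mem this heM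
    simpa using h2
  have htop : lp p w = ⊤ := by
    apply top_unique
    rw [← sup_line_eq_top p (he0 he) he]
    exact sup_le hsub ((Submodule.span_singleton_le_iff_mem _ _).mpr heM)
  exact lp_ne_top p hw0 htop

/-- chart point avoiding two line-perps of nonzero vectors of `e^⊥` (char ≠ 2). -/
theorem avoidTwo (h2 : (2 : K) ≠ 0) (he : e ∉ lp p e) {w w' : E}
    (hwe : w ∈ lp p e) (hw0 : w ≠ 0) (hwe' : w' ∈ lp p e) (hw0' : w' ≠ 0) :
    ∃ z, pc p e e z = 1 ∧ z ∉ lp p w ∧ z ∉ lp p w' := by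
  obtain ⟨a, ha1, ha⟩ := exists_chart_not_mem he hwe hw0
  obtain ⟨b, hb1, hb⟩ := exists_chart_not_mem he hwe' hw0'
  by_cases haw' : a ∉ lp p w'
  · exact ⟨a, ha1, ha, haw'⟩
  by_cases hbw : b ∉ lp p w
  · exact ⟨b, hb1, hbw, hb⟩
  push_neg at haw' hbw
  refine ⟨(2 : K) • b - a, ?_, ?_, ?_⟩
  · rw [map_sub, map_smul, hb1, ha1, smul_eq_mul, mul_one]
    norm_num
  · intro hmem
    have : a ∈ lp p w := by
      have := sub_mem (smul_mem (lp p w) (2:K) hbw) hmem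
      simpa using this
    exact ha this
  · intro hmem
    have h2b : (2 : K) • b ∈ lp p w' := by
      have := add_mem hmem haw'
      simpa using this
    have : b ∈ lp p w' := by
      have := smul_mem (lp p w') (2:K)⁻¹ h2b
      rwa [smul_smul, inv_mul_cancel₀ h2, one_smul] at this
    exact hb this

/-- hop: adjust `x` by `w ∈ e^⊥ ∩ y^⊥ \ y'^⊥` to get prescribed `f_{y'}`-value `μ`,
keeping `f_y`-value and `f_x(y)`. -/
theorem hop (hdim : 3 ≤ Module.rank K E) (he : e ∉ lp p e) {x y y' w : E}
    (hx : pc p e e x = 1) (hy : pc p e e y = 1) (hy' : pc p e e y' = 1)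
    (hwe : w ∈ lp p e) (hwy : w ∈ lp p y) (hwy' : w ∉ lp p y') :
    ∃ x'', pc p e e x'' = 1 ∧ pc p y e x'' = pc p y e x ∧
      pc p y' e x'' = pc p y e x ∧ pc p x e y = pc p x'' e y := by
  set μ := pc p y e x with hμ
  have hq : pc p y' e w ≠ 0 := fun h => hwy' ((f_zero_iff hdim he hy').mp h)
  set t := (μ - pc p y' e x) * (pc p y' e w)⁻¹ with ht
  refine ⟨x + t • w, ?_, ?_, ?_, ?_⟩
  · rw [map_add, map_smul, hx, (c_zero_iff he).mpr hwe, smul_zero, add_zero]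
  · rw [map_add, map_smul, (f_zero_iff hdim he hy).mpr hwy, smul_zero, add_zero]
  · rw [map_add, map_smul, smul_eq_mul, ht, mul_assoc, inv_mul_cancel₀ hq, mul_one]
    abel
  · exact (keyL hdim he hx hy (smul_mem _ _ hwe) (smul_mem _ _ hwy)).symm

/-- Full well-definedness of the `σ`-pairing. -/
theorem wd (hdim : 3 ≤ Module.rank K E) (h2 : (2 : K) ≠ 0) (he : e ∉ lp p e)
    {x y x' y' : E} (hx : pc p e e x = 1) (hy : pc p e e y = 1)
    (hx' : pc p e e x' = 1) (hy' : pc p e e y' = 1)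
    (hval : pc p y e x = pc p y' e x') :
    pc p x e y = pc p x' e y' := by
  by_cases hyy : y = y'
  · subst hyy
    exact sameY hdim he hx hx' hy hval
  by_cases hex : ∃ w, w ∈ lp p e ∧ w ∈ lp p y ∧ w ∉ lp p y'
  · obtain ⟨w, hwe, hwy, hwy'⟩ := hex
    obtain ⟨x'', hx'', hv1, hv2, hEq⟩ := hop hdim he hx hy hy' hwe hwy hwy'
    calc pc p x e y = pc p x'' e y := hEq
      _ = pc p x'' e y' := lemR hdim he hx'' hy hy' (by rw [hv1, hv2])
      _ = pc p x' e y' := sameY hdim he hx'' hx' hy' (by rw [hv2, ← hval])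
  · -- need an intermediate chart point y''
    obtain ⟨w, hw, hw0⟩ := inf_lp_ne_bot p (he0 he) (chart_ne_zero hy) hdim
    obtain ⟨w', hw', hw0'⟩ := inf_lp_ne_bot p (he0 he) (chart_ne_zero hy') hdim
    obtain ⟨z, hz1, hzw, hzw'⟩ := avoidTwo h2 he hw.1 hw0 hw'.1 hw0'
    have hwz : w ∉ lp p z := fun h => hzw (lp_symm p hdim (he0 he) h)
    have hwz' : w' ∉ lp p z := fun h => hzw' (lp_symm p hdim (he0 he) h)
    obtain ⟨x₂, hx₂, hv1, hv2, hEq1⟩ := hop hdim he hx hy hz1 hw.1 hw.2 hwz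
    obtain ⟨x₃, hx₃, hv1', hv2', hEq1'⟩ := hop hdim he hx' hy' hz1 hw'.1 hw'.2 hwz'
    calc pc p x e y = pc p x₂ e y := hEq1
      _ = pc p x₂ e z := lemR hdim he hx₂ hy hz1 (by rw [hv1, hv2])
      _ = pc p x₃ e z := sameY hdim he hx₂ hx₃ hz1 (by rw [hv2, hv2', hval])
      _ = pc p x₃ e y' := (lemR hdim he hx₃ hy' hz1 (by rw [hv1', hv2'])).symm
      _ = pc p x' e y' := hEq1'.symm

open Classical in
/-- distinguished nonzero element of `e^⊥`. -/
noncomputable def ustar (p : Polarity K E) (e : E) : E :=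
  if h : ∃ u, u ∈ lp p e ∧ u ≠ 0 then h.choose else 0

theorem ustar_spec (hdim : 3 ≤ Module.rank K E) (he : e ∉ lp p e) :
    ustar p e ∈ lp p e ∧ ustar p e ≠ 0 := by
  have hex : ∃ u, u ∈ lp p e ∧ u ≠ 0 := by
    obtain ⟨u, hu, hu0⟩ := inf_lp_ne_bot p (he0 he) (he0 he) hdim
    exact ⟨u, hu.1, hu0⟩
  rw [ustar, dif_pos hex]
  exact hex.choose_spec

/-- distinguished chart point `≠ e`. -/
noncomputable def ystar (p : Polarity K E) (e : E) : E := e + ustar p e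

theorem ystar_chart (hdim : 3 ≤ Module.rank K E) (he : e ∉ lp p e) :
    pc p e e (ystar p e) = 1 := by
  rw [ystar, map_add, c_e he, (c_zero_iff he).mpr (ustar_spec hdim he).1, add_zero]

theorem ystar_ne (hdim : 3 ≤ Module.rank K E) (he : e ∉ lp p e) : ystar p e ≠ e := by
  intro h
  have := (ustar_spec (p := p) hdim he).2
  apply this
  have : e + ustar p e = e + 0 := by rw [add_zero]; exact h
  exact add_left_cancel this

open Classical in
/-- the involution `σ`. -/
noncomputable def sig (p : Polarity K E) (e : E) (μ : K) : K :=
  if h : ∃ x, pc p e e x = 1 ∧ pc p (ystar p e) e x = μ then pc p h.choose e (ystar p e)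
  else 0

/-- specification of `σ`. -/
theorem sig_spec (hdim : 3 ≤ Module.rank K E) (h2 : (2 : K) ≠ 0) (he : e ∉ lp p e)
    {x y : E} (hx : pc p e e x = 1) (hy : pc p e e y = 1) (hne : y ≠ e) :
    sig p e (pc p y e x) = pc p x e y := by
  have hex : ∃ x', pc p e e x' = 1 ∧ pc p (ystar p e) e x' = pc p y e x :=
    exists_chart_val hdim he (ystar_chart hdim he) (ystar_ne hdim he) _
  rw [sig, dif_pos hex]
  exact wd hdim h2 he hex.choose_spec.1 (ystar_chart hdim he) hx hy
    (hex.choose_spec.2.trans rfl)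

theorem sig_one (hdim : 3 ≤ Module.rank K E) (h2 : (2 : K) ≠ 0) (he : e ∉ lp p e) :
    sig p e 1 = 1 := by
  have h := sig_spec hdim h2 he (c_e he) (ystar_chart hdim he) (ystar_ne hdim he)
  rw [f_at_e hdim he (ystar_chart hdim he)] at h
  rw [h]
  exact ystar_chart hdim he

theorem sig_zero (hdim : 3 ≤ Module.rank K E) (h2 : (2 : K) ≠ 0) (he : e ∉ lp p e) :
    sig p e 0 = 0 := by
  obtain ⟨x, hx, hval⟩ := exists_chart_val hdim he (ystar_chart hdim he) (ystar_ne hdim he) 0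
  have h := sig_spec hdim h2 he hx (ystar_chart hdim he) (ystar_ne hdim he)
  rw [hval] at h
  rw [h]
  have hxy : x ∈ lp p (ystar p e) := (f_zero_iff hdim he (ystar_chart hdim he)).mp hval
  have : ystar p e ∈ lp p x := lp_symm p hdim (he0 he) hxy
  exact f_mem hdim he hx this

/-- involution. -/
theorem sig_invol (hdim : 3 ≤ Module.rank K E) (h2 : (2 : K) ≠ 0) (he : e ∉ lp p e)
    (μ : K) : sig p e (sig p e μ) = μ := by
  obtain ⟨x, hx, hval⟩ := exists_chart_val hdim he (ystar_chart hdim he) (ystar_ne hdim he) μ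
  by_cases hxe : x = e
  · subst hxe
    rw [f_at_e hdim he (ystar_chart hdim he)] at hval
    subst hval
    rw [sig_one hdim h2 he, sig_one hdim h2 he]
  · have h1 : sig p e μ = pc p x e (ystar p e) := by
      rw [← hval]
      exact sig_spec hdim h2 he hx (ystar_chart hdim he) (ystar_ne hdim he)
    have h2' : sig p e (pc p x e (ystar p e)) = pc p (ystar p e) e x :=
      sig_spec hdim h2 he (ystar_chart hdim he) hx hxe
    rw [h1, h2', hval]

end BvN

namespace BvN
open Submodule

variable {K E : Type*} [DivisionRing K] [AddCommGroup E] [Module K E]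
variable {p : Polarity K E} {e : E}

/-- The difference functional `f_{x+u} - f_x` vanishes on `u^⊥` (chart `x`, `u ∈ e^⊥`). -/
theorem van (hdim : 3 ≤ Module.rank K E) (h2 : (2 : K) ≠ 0) (he : e ∉ lp p e)
    {x u : E} (hx : pc p e e x = 1) (hue : u ∈ lp p e) (hu0 : u ≠ 0)
    {t : E} (ht : t ∈ lp p u) : pc p (x + u) e t = pc p x e t := by
  have hxu : pc p e e (x + u) = 1 := by
    rw [map_add, hx, (c_zero_iff he).mpr hue, add_zero]
  -- chart case
  have hchart : ∀ s : E, pc p e e s = 1 → s ∈ lp p u → pc p (x + u) e s = pc p x e s := by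
    intro s hs hsu
    by_cases hse : s = e
    · subst hse
      rw [f_at_e hdim he hxu, f_at_e hdim he hx]
    · have hus : u ∈ lp p s := lp_symm p hdim (he0 he) hsu
      have h1 : pc p s e (x + u) = pc p s e x := by
        rw [map_add, f_mem hdim he hs hus, add_zero]
      calc pc p (x + u) e s = sig p e (pc p s e (x + u)) :=
            (sig_spec hdim h2 he hxu hs hse).symm
        _ = sig p e (pc p s e x) := by rw [h1]
        _ = pc p x e s := sig_spec hdim h2 he hx hs hse
  -- normalization: any `s ∈ u^⊥` with `c s ≠ 0`
  have key : ∀ s : E, s ∈ lp p u → pc p e e s ≠ 0 → pc p (x + u) e s = pc p x e s := by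
    intro s hsu hcs
    have hnorm : pc p e e ((pc p e e s)⁻¹ • s) = 1 := by
      rw [map_smul, smul_eq_mul, inv_mul_cancel₀ hcs]
    have hmem : (pc p e e s)⁻¹ • s ∈ lp p u := Submodule.smul_mem _ _ hsu
    have hch := hchart _ hnorm hmem
    rw [map_smul, map_smul, smul_eq_mul, smul_eq_mul] at hch
    calc pc p (x + u) e s = pc p e e s * ((pc p e e s)⁻¹ * pc p (x + u) e s) := by
          rw [← mul_assoc, mul_inv_cancel₀ hcs, one_mul]
      _ = pc p e e s * ((pc p e e s)⁻¹ * pc p x e s) := by rw [hch]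
      _ = pc p x e s := by rw [← mul_assoc, mul_inv_cancel₀ hcs, one_mul]
  by_cases hct : pc p e e t = 0
  · -- c t = 0 : difference trick
    have hne : ¬ lp p u ≤ lp p e := by
      intro hle
      have h1 := lp_le_lp p hu0 (he0 he) hle
      rw [Submodule.mem_span_singleton] at h1
      obtain ⟨ρ, hρ⟩ := h1
      have hmem : ρ • u ∈ lp p e := Submodule.smul_mem _ _ hue
      rw [hρ] at hmem
      exact he hmem
    have hex : ∃ t₁, t₁ ∈ lp p u ∧ t₁ ∉ lp p e := by
      by_contra hc; push_neg at hc; exact hne hc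
    obtain ⟨t₁, ht₁u, ht₁e⟩ := hex
    have hc1 : pc p e e t₁ ≠ 0 := fun h => ht₁e ((c_zero_iff he).mp h)
    have e1 : pc p (x + u) e (t + t₁) = pc p x e (t + t₁) := by
      apply key _ (add_mem ht ht₁u)
      rw [map_add, hct, zero_add]
      exact hc1
    have e2 : pc p (x + u) e t₁ = pc p x e t₁ := key _ ht₁u hc1
    have e3 := congrArg₂ (· - ·) e1 e2
    simpa [map_add] using e3
  · exact key t ht hct

end BvN

namespace BvN
open Submodule

variable {K E : Type*} [DivisionRing K] [AddCommGroup E] [Module K E]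
variable {p : Polarity K E} {e : E}

theorem two_ne_one (h2 : (2 : K) ≠ 0) : (2 : K) ≠ 1 := by
  intro h
  have h1 : (2 : K) - 1 = 1 - 1 := by rw [h]
  norm_num at h1

theorem sig_inj (hdim : 3 ≤ Module.rank K E) (h2 : (2 : K) ≠ 0) (he : e ∉ lp p e)
    {a b : K} (h : sig p e a = sig p e b) : a = b := by
  have := congrArg (sig p e) h
  rwa [sig_invol hdim h2 he, sig_invol hdim h2 he] at this

/-- value of `f_v` at a chart point through `sig`. -/
theorem f_flip (hdim : 3 ≤ Module.rank K E) (h2 : (2 : K) ≠ 0) (he : e ∉ lp p e)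
    {x v : E} (hx : pc p e e x = 1) (hv : pc p e e v = 1) (hve : v ≠ e) :
    pc p v e x = sig p e (pc p x e v) := by
  have h1 : sig p e (pc p v e x) = pc p x e v := sig_spec hdim h2 he hx hv hve
  have := congrArg (sig p e) h1
  rwa [sig_invol hdim h2 he] at this

theorem universal (hdim : 3 ≤ Module.rank K E) (h2 : (2 : K) ≠ 0) (he : e ∉ lp p e) :
    ∀ a b : K, b ≠ 1 →
      sig p e (sig p e a + sig p e b - 1) = a + b - 1 := by
  classical
  set u₀ := ustar p e with hu₀def
  set z₀ := ystar p e with hz₀def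
  have hu₀ : u₀ ∈ lp p e := (ustar_spec hdim he).1
  have hu₀0 : u₀ ≠ 0 := (ustar_spec hdim he).2
  have hz₀c : pc p e e z₀ = 1 := ystar_chart hdim he
  have hz₀e : z₀ ≠ e := ystar_ne hdim he
  have hz₀eq : z₀ = e + u₀ := rfl
  obtain ⟨w, hwe, hwz₀⟩ := exists_mem_lp_not_mem (he0 he) (chart_ne_zero hz₀c)
    (lp_ne_of_chart he hz₀c hz₀e).symm
  have hw0 : w ≠ 0 := fun h => hwz₀ (h ▸ zero_mem _)
  obtain ⟨n, hn, hn0⟩ := inf_lp_ne_bot p hw0 (he0 he) hdim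
  set x₀ := e + n with hx₀def
  have hx₀c : pc p e e x₀ = 1 := by
    rw [hx₀def, map_add, c_e he, (c_zero_iff he).mpr hn.2, add_zero]
  have hx₀e : x₀ ≠ e := by
    rw [hx₀def]; intro h; exact hn0 (by simpa using congrArg (· - e) h)
  have hx₀w : x₀ ∈ lp p w := by
    rw [hx₀def]
    exact add_mem (lp_symm p hdim (he0 he) hwe) hn.1
  have hwx₀ : w ∈ lp p x₀ := lp_symm p hdim (he0 he) hx₀w
  obtain ⟨s', hs'e, hs'x₀⟩ := exists_mem_lp_not_mem (he0 he) (chart_ne_zero hx₀c)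
    (lp_ne_of_chart he hx₀c hx₀e).symm
  have hA1 : pc p x₀ e s' ≠ 0 := fun h => hs'x₀ ((f_zero_iff hdim he hx₀c).mp h)
  have hB1 : pc p z₀ e w ≠ 0 := fun h => hwz₀ ((f_zero_iff hdim he hz₀c).mp h)
  have hwx₀0 : pc p x₀ e w = 0 := f_mem hdim he hx₀c hwx₀
  -- test vectors
  have test : ∀ a b : K, ∃ v, pc p e e v = 1 ∧ pc p x₀ e v = a ∧ pc p z₀ e v = b := by
    intro a b
    refine ⟨e + ((a - 1) * (pc p x₀ e s')⁻¹) • s' +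
      ((b - 1 - (a - 1) * (pc p x₀ e s')⁻¹ * pc p z₀ e s') * (pc p z₀ e w)⁻¹) • w,
      ?_, ?_, ?_⟩
    · rw [map_add, map_add, map_smul, map_smul, c_e he, (c_zero_iff he).mpr hs'e,
        (c_zero_iff he).mpr hwe, smul_zero, smul_zero, add_zero, add_zero]
    · rw [map_add, map_add, map_smul, map_smul, f_at_e hdim he hx₀c, hwx₀0,
        smul_zero, add_zero, smul_eq_mul, inv_mul_cancel_right₀ hA1]
      abel
    · rw [map_add, map_add, map_smul, map_smul, f_at_e hdim he hz₀c, smul_eq_mul,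
        smul_eq_mul, inv_mul_cancel_right₀ hB1]
      abel
  -- properties of a test vector with b ≠ 1
  have vprop : ∀ a b : K, b ≠ 1 → ∀ v, pc p e e v = 1 → pc p x₀ e v = a →
      pc p z₀ e v = b → v ≠ e ∧ pc p v e u₀ = sig p e b - 1 ∧ v ∉ lp p u₀ := by
    intro a b hb v hv hva hvb
    have hve : v ≠ e := by
      intro h; rw [h, f_at_e hdim he hz₀c] at hvb; exact hb hvb.symm
    have h1 : pc p v e z₀ = sig p e b := by
      rw [← hvb]; exact f_flip hdim h2 he hz₀c hv hve
    have hsplit : pc p v e z₀ = 1 + pc p v e u₀ := by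
      rw [hz₀eq, map_add, f_at_e hdim he hv]
    have h2' : pc p v e u₀ = sig p e b - 1 := by
      rw [← h1, hsplit]; abel
    have h3 : v ∉ lp p u₀ := by
      intro hmem
      have hmm : u₀ ∈ lp p v := lp_symm p hdim (he0 he) hmem
      have h0 : pc p v e u₀ = 0 := f_mem hdim he hv hmm
      rw [h0] at h2'
      have hsig : sig p e b = 1 := sub_eq_zero.mp h2'.symm
      apply hb
      apply sig_inj hdim h2 he
      rw [hsig, sig_one hdim h2 he]
    exact ⟨hve, h2', h3⟩
  obtain ⟨v₀, hv₀, hv₀a, hv₀b⟩ := test 0 2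
  obtain ⟨hv₀e, hv₀q, hv₀mem⟩ := vprop 0 2 (two_ne_one h2) v₀ hv₀ hv₀a hv₀b
  set κ := pc p (x₀ + u₀) e v₀ - pc p x₀ e v₀ with hκ
  have hx₀u₀c : pc p e e (x₀ + u₀) = 1 := by
    rw [map_add, hx₀c, (c_zero_iff he).mpr hu₀, add_zero]
  have main : ∀ a b : K, b ≠ 1 →
      sig p e (sig p e a + sig p e b - 1) - a = (b - 1) * κ := by
    intro a b hb
    obtain ⟨v, hv, hva, hvb⟩ := test a b
    obtain ⟨hve, hvq, hvmem⟩ := vprop a b hb v hv hva hvb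
    have hvsup : v ∈ lp p u₀ ⊔ Submodule.span K {v₀} := by
      rw [(sup_line_eq_top p hu₀0 hv₀mem : _)]; trivial
    rw [Submodule.mem_sup] at hvsup
    obtain ⟨h, hh, z, hz, hvdec⟩ := hvsup
    rw [Submodule.mem_span_singleton] at hz
    obtain ⟨ρ, rfl⟩ := hz
    have hD'h : pc p z₀ e h = pc p e e h := by
      rw [hz₀eq]
      exact van hdim h2 he (c_e he) hu₀ hu₀0 hh
    have hD'v₀ : pc p z₀ e v₀ - pc p e e v₀ = 1 := by rw [hv₀b, hv₀]; norm_num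
    have hρ : ρ = b - 1 := by
      have e1 : pc p z₀ e v - pc p e e v = ρ * (pc p z₀ e v₀ - pc p e e v₀) := by
        rw [← hvdec]
        rw [map_add, map_add, map_smul, map_smul, hD'h, smul_eq_mul, smul_eq_mul,
          mul_sub]
        abel
      rw [hvb, hv, hD'v₀, mul_one] at e1
      exact e1.symm
    have hDh : pc p (x₀ + u₀) e h = pc p x₀ e h :=
      van hdim h2 he hx₀c hu₀ hu₀0 hh
    have e2 : pc p (x₀ + u₀) e v - pc p x₀ e v = ρ * κ := by
      rw [← hvdec, hκ]
      rw [map_add, map_add, map_smul, map_smul, hDh, smul_eq_mul, smul_eq_mul,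
        mul_sub]
      abel
    have e3 : pc p (x₀ + u₀) e v = sig p e (sig p e a + sig p e b - 1) := by
      have h4 : pc p v e (x₀ + u₀) = sig p e a + sig p e b - 1 := by
        rw [map_add, hvq, f_flip hdim h2 he hx₀c hv hve, hva]
        abel
      have h5 : sig p e (pc p v e (x₀ + u₀)) = pc p (x₀ + u₀) e v :=
        sig_spec hdim h2 he hx₀u₀c hv hve
      rw [← h5, h4]
    rw [e3, hva] at e2
    rw [e2, hρ]
  have hκ1 : κ = 1 := by
    have e1 := main 0 2 (two_ne_one h2)
    have e2 := main 2 0 (fun h => one_ne_zero h.symm)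
    rw [sig_zero hdim h2 he] at e1 e2
    norm_num at e1 e2
    -- e1 : sig (sig 2 - 1) = κ ; e2 : sig (sig 2 - 1) - 2 = -κ
    rw [e1] at e2
    -- e2 : κ - 2 = -κ
    have h7 : κ + κ - 2 = 0 := by
      rw [add_sub_assoc, e2]
      exact add_neg_cancel κ
    have h8 : (2 : K) * κ = 2 := by
      rw [two_mul, ← sub_eq_zero]
      exact h7
    calc κ = (2 : K)⁻¹ * (2 * κ) := by rw [← mul_assoc, inv_mul_cancel₀ h2, one_mul]
      _ = (2 : K)⁻¹ * 2 := by rw [h8]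
      _ = 1 := inv_mul_cancel₀ h2
  intro a b hb
  have hm := main a b hb
  rw [hκ1, mul_one] at hm
  have h9 := eq_add_of_sub_eq hm
  rw [h9]
  abel

theorem sig_add_aux (hdim : 3 ≤ Module.rank K E) (h2 : (2 : K) ≠ 0) (he : e ∉ lp p e)
    {A B : K} (hB : B ≠ 1) : sig p e (A + B - 1) = sig p e A + sig p e B - 1 := by
  have h := universal hdim h2 he (sig p e A) (sig p e B)
    (fun h => hB (by
      have := congrArg (sig p e) h
      rwa [sig_invol hdim h2 he, sig_one hdim h2 he] at this))
  rwa [sig_invol hdim h2 he, sig_invol hdim h2 he] at h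

theorem sig_two (hdim : 3 ≤ Module.rank K E) (h2 : (2 : K) ≠ 0) (he : e ∉ lp p e) :
    sig p e 2 = 2 := by
  have h := sig_add_aux hdim h2 he (A := (2:K)) (B := (0:K))
    (fun h => one_ne_zero h.symm)
  rw [sig_zero hdim h2 he] at h
  have h1 : (2 : K) + 0 - 1 = 1 := by norm_num
  rw [h1, sig_one hdim h2 he, add_zero] at h
  -- h : 1 = sig 2 - 1
  have := sub_eq_iff_eq_add.mp h.symm
  rw [this, one_add_one_eq_two]

theorem sig_add (hdim : 3 ≤ Module.rank K E) (h2 : (2 : K) ≠ 0) (he : e ∉ lp p e)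
    (μ ν : K) : sig p e (μ + ν) = sig p e μ + sig p e ν := by
  by_cases hν : ν = 0
  · subst hν; rw [sig_zero hdim h2 he, add_zero, add_zero]
  have hν1 : ν + 1 ≠ 1 := by
    intro h
    apply hν
    have h' : ν + 1 = 0 + 1 := by rw [h, zero_add]
    exact add_right_cancel h'
  have h1 : sig p e (ν + 1) = sig p e ν + 1 := by
    have ht := sig_add_aux hdim h2 he (A := ν) (B := (2:K)) (two_ne_one h2)
    rw [sig_two hdim h2 he] at ht
    have e1 : ν + 2 - 1 = ν + 1 := by
      rw [← one_add_one_eq_two]; abel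
    rw [e1] at ht
    rw [ht, ← one_add_one_eq_two]
    abel
  have ht := sig_add_aux hdim h2 he (A := μ) (B := ν + 1) hν1
  have e1 : μ + (ν + 1) - 1 = μ + ν := by abel
  rw [e1, h1] at ht
  rw [ht]
  abel

theorem sig_sub (hdim : 3 ≤ Module.rank K E) (h2 : (2 : K) ≠ 0) (he : e ∉ lp p e)
    (μ ν : K) : sig p e (μ - ν) = sig p e μ - sig p e ν := by
  have h := sig_add hdim h2 he (μ - ν) ν
  rw [sub_add_cancel] at h
  exact eq_sub_of_add_eq h.symm

theorem sig_neg (hdim : 3 ≤ Module.rank K E) (h2 : (2 : K) ≠ 0) (he : e ∉ lp p e)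
    (μ : K) : sig p e (-μ) = -sig p e μ := by
  have := sig_sub hdim h2 he 0 μ
  rwa [zero_sub, sig_zero hdim h2 he, zero_sub] at this

end BvN

namespace BvN
open Submodule

variable {K E : Type*} [DivisionRing K] [AddCommGroup E] [Module K E]
variable {p : Polarity K E} {e : E}

/-- chart vector `v ≠ e` with prescribed nonzero value `pc v e w = q` against `w ∈ e^⊥`. -/
theorem exists_vq (hdim : 3 ≤ Module.rank K E) (h2 : (2 : K) ≠ 0) (he : e ∉ lp p e)
    {w : E} (hw : w ∈ lp p e) (hw0 : w ≠ 0) {q : K} (hq : q ≠ 0) :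
    ∃ v, pc p e e v = 1 ∧ v ≠ e ∧ pc p v e w = q := by
  have hzc : pc p e e (e + w) = 1 := by
    rw [map_add, c_e he, (c_zero_iff he).mpr hw, add_zero]
  have hze : e + w ≠ e := by
    intro h; exact hw0 (by simpa using congrArg (· - e) h)
  obtain ⟨v, hv, hval⟩ := exists_chart_val hdim he hzc hze (sig p e q + 1)
  have hve : v ≠ e := by
    intro h
    rw [h, f_at_e hdim he hzc] at hval
    have : sig p e q = 0 := by
      have h' : sig p e q + 1 = 0 + 1 := by rw [← hval, zero_add]
      exact add_right_cancel h'
    apply hq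
    have := congrArg (sig p e) this
    rwa [sig_invol hdim h2 he, sig_zero hdim h2 he] at this
  refine ⟨v, hv, hve, ?_⟩
  have h1 : pc p v e (e + w) = sig p e (sig p e q + 1) := by
    rw [← hval]
    exact f_flip hdim h2 he hzc hv hve
  rw [map_add, f_at_e hdim he hv, sig_add hdim h2 he, sig_one hdim h2 he,
    sig_invol hdim h2 he] at h1
  have h' : 1 + pc p v e w = q + 1 := h1
  have h'' : pc p v e w + 1 = q + 1 := by rw [← h']; abel
  exact add_right_cancel h''

/-- anti-multiplicativity of `sig`. -/
theorem sig_mul (hdim : 3 ≤ Module.rank K E) (h2 : (2 : K) ≠ 0) (he : e ∉ lp p e)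
    (ρ q : K) : sig p e (ρ * q) = sig p e q * sig p e ρ := by
  by_cases hq : q = 0
  · subst hq; rw [mul_zero, sig_zero hdim h2 he, zero_mul]
  by_cases hρ : ρ = 0
  · subst hρ; rw [zero_mul, sig_zero hdim h2 he, mul_zero]
  set u₀ := ustar p e with hu₀def
  have hu₀ : u₀ ∈ lp p e := (ustar_spec hdim he).1
  have hu₀0 : u₀ ≠ 0 := (ustar_spec hdim he).2
  obtain ⟨vq, hvq, hvqe, hvqval⟩ := exists_vq hdim h2 he hu₀ hu₀0 hq
  obtain ⟨v1, hv1, hv1e, hv1val⟩ := exists_vq hdim h2 he hu₀ hu₀0 (one_ne_zero : (1:K) ≠ 0)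
  -- v1 ∉ lp u₀
  have hv1mem : v1 ∉ lp p u₀ := by
    intro hmem
    have : u₀ ∈ lp p v1 := lp_symm p hdim (he0 he) hmem
    rw [f_mem hdim he hv1 this] at hv1val
    exact one_ne_zero hv1val.symm
  -- value lemma : for chart v ≠ e, pc (e + τ•u₀) e v = 1 + sig (τ * pc v e u₀)
  have hval : ∀ (τ : K), τ ≠ 0 → ∀ (v : E), pc p e e v = 1 → v ≠ e →
      pc p (e + τ • u₀) e v = 1 + sig p e (τ * pc p v e u₀) := by
    intro τ hτ v hv hve
    have hcc : pc p e e (e + τ • u₀) = 1 := by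
      rw [map_add, c_e he, map_smul, (c_zero_iff he).mpr hu₀, smul_zero, add_zero]
    have hXe : e + τ • u₀ ≠ e := by
      intro h
      have h' := congrArg (· - e) h
      simp only [add_sub_cancel_left, sub_self] at h'
      exact hτ (by simpa [smul_eq_zero, hu₀0] using h')
    have h1 : pc p (e + τ • u₀) e v = sig p e (pc p v e (e + τ • u₀)) :=
      f_flip hdim h2 he hv hcc hXe
    rw [map_add, map_smul, f_at_e hdim he hv, smul_eq_mul] at h1
    rw [h1, sig_add hdim h2 he, sig_one hdim h2 he]
  -- vanishing of differences on lp u₀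
  have hvan : ∀ (τ : K), τ ≠ 0 → ∀ t ∈ lp p u₀,
      pc p (e + τ • u₀) e t = pc p e e t := by
    intro τ hτ t ht
    have h1 : τ • u₀ ∈ lp p e := Submodule.smul_mem _ _ hu₀
    have h2' : τ • u₀ ≠ 0 := smul_ne_zero hτ hu₀0
    have h3 : t ∈ lp p (τ • u₀) := by rwa [lp_smul p hτ]
    exact van hdim h2 he (c_e he) h1 h2' h3
  -- decompose vq over lp u₀ ⊕ span v1
  have hvsup : vq ∈ lp p u₀ ⊔ Submodule.span K {v1} := by
    rw [(sup_line_eq_top p hu₀0 hv1mem : _)]; trivial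
  rw [Submodule.mem_sup] at hvsup
  obtain ⟨h, hh, z, hz, hvdec⟩ := hvsup
  rw [Submodule.mem_span_singleton] at hz
  obtain ⟨τ, rfl⟩ := hz
  -- evaluate D_ρ and D_1 at vq
  have keyD : ∀ (γ : K), γ ≠ 0 →
      sig p e (γ * q) = τ * sig p e (γ * 1) := by
    intro γ hγ
    have e1 : pc p (e + γ • u₀) e vq - pc p e e vq =
        τ * (pc p (e + γ • u₀) e v1 - pc p e e v1) := by
      rw [← hvdec, map_add, map_add, map_smul, map_smul,
        hvan γ hγ h hh, smul_eq_mul, smul_eq_mul, mul_sub]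
      abel
    rw [hval γ hγ vq hvq hvqe, hval γ hγ v1 hv1 hv1e, hvq, hv1, hvqval, hv1val] at e1
    have e2 : sig p e (γ * q) = τ * sig p e (γ * 1) := by
      have h3 : (1 : K) + sig p e (γ * q) - 1 = sig p e (γ * q) := by abel
      have h4 : (1 : K) + sig p e (γ * 1) - 1 = sig p e (γ * 1) := by abel
      rw [h3, h4] at e1
      exact e1
    exact e2
  have hτ : τ = sig p e q := by
    have := keyD 1 one_ne_zero
    rw [one_mul, one_mul, sig_one hdim h2 he, mul_one] at this
    exact this.symm
  have := keyD ρ hρ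
  rw [mul_one, hτ] at this
  exact this

/-- Claim M : scaling relation for the difference functionals. -/
theorem claimM (hdim : 3 ≤ Module.rank K E) (h2 : (2 : K) ≠ 0) (he : e ∉ lp p e)
    {w : E} (hw : w ∈ lp p e) (ρ : K) (x : E) :
    pc p (e + ρ • w) e x - pc p e e x =
      (pc p (e + w) e x - pc p e e x) * sig p e ρ := by
  by_cases hw0 : w = 0
  · subst hw0
    simp only [smul_zero, add_zero, sub_self, zero_mul]
  by_cases hρ : ρ = 0
  · subst hρ
    rw [zero_smul, add_zero, sub_self, sig_zero hdim h2 he, mul_zero]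
  -- pick v1 chart not in lp w
  obtain ⟨v1, hv1c, hv1w⟩ := exists_chart_not_mem he hw hw0
  have hq1 : pc p v1 e w ≠ 0 := by
    intro h
    exact hv1w (lp_symm p hdim (he0 he) ((f_zero_iff hdim he hv1c).mp h))
  have hv1e : v1 ≠ e := by
    intro h
    apply hv1w
    rw [h]
    exact lp_symm p hdim (he0 he) hw
  have hval : ∀ (τ : K), τ ≠ 0 → pc p (e + τ • w) e v1 = 1 + sig p e (τ * pc p v1 e w) := by
    intro τ hτ
    have hcc : pc p e e (e + τ • w) = 1 := by
      rw [map_add, c_e he, map_smul, (c_zero_iff he).mpr hw, smul_zero, add_zero]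
    have hXe : e + τ • w ≠ e := by
      intro h
      have h' := congrArg (· - e) h
      simp only [add_sub_cancel_left, sub_self] at h'
      exact hτ (by simpa [smul_eq_zero, hw0] using h')
    have h1 : pc p (e + τ • w) e v1 = sig p e (pc p v1 e (e + τ • w)) :=
      f_flip hdim h2 he hv1c hcc hXe
    rw [map_add, map_smul, f_at_e hdim he hv1c, smul_eq_mul] at h1
    rw [h1, sig_add hdim h2 he, sig_one hdim h2 he]
  have hvan : ∀ (τ : K), τ ≠ 0 → ∀ t ∈ lp p w,
      pc p (e + τ • w) e t = pc p e e t := by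
    intro τ hτ t ht
    have h1 : τ • w ∈ lp p e := Submodule.smul_mem _ _ hw
    have h2' : τ • w ≠ 0 := smul_ne_zero hτ hw0
    have h3 : t ∈ lp p (τ • w) := by rwa [lp_smul p hτ]
    exact van hdim h2 he (c_e he) h1 h2' h3
  -- decompose x over lp w ⊕ span v1
  have hxsup : x ∈ lp p w ⊔ Submodule.span K {v1} := by
    rw [(sup_line_eq_top p hw0 hv1w : _)]; trivial
  rw [Submodule.mem_sup] at hxsup
  obtain ⟨h, hh, z, hz, hxdec⟩ := hxsup
  rw [Submodule.mem_span_singleton] at hz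
  obtain ⟨τ, rfl⟩ := hz
  have hs1 : ∀ (γ : K), γ ≠ 0 → pc p (e + γ • w) e x - pc p e e x =
      τ * sig p e (γ * pc p v1 e w) := by
    intro γ hγ
    rw [← hxdec, map_add, map_add, map_smul, map_smul, hvan γ hγ h hh,
      smul_eq_mul, smul_eq_mul, hval γ hγ, hv1c, mul_add, mul_one]
    abel
  have e1 := hs1 ρ hρ
  have e2 := hs1 1 one_ne_zero
  rw [one_smul, one_mul] at e2
  rw [e1, e2, sig_mul hdim h2 he, ← mul_assoc]

theorem neg_one_smul_eq {w : E} : (-1 : K) • w = -w := by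
  rw [neg_smul, one_smul]

theorem claimM_neg (hdim : 3 ≤ Module.rank K E) (h2 : (2 : K) ≠ 0) (he : e ∉ lp p e)
    {w : E} (hw : w ∈ lp p e) (x : E) :
    pc p (e - w) e x - pc p e e x = -(pc p (e + w) e x - pc p e e x) := by
  have := claimM hdim h2 he hw (-1) x
  rw [neg_one_smul_eq, sig_neg hdim h2 he, sig_one hdim h2 he, mul_neg_one] at this
  rw [← this, sub_eq_add_neg e w]

/-- Claim A : additivity of the normalized functionals on the chart. -/
theorem claimA (hdim : 3 ≤ Module.rank K E) (h2 : (2 : K) ≠ 0) (he : e ∉ lp p e)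
    {w₁ w₂ : E} (hw₁ : w₁ ∈ lp p e) (hw₂ : w₂ ∈ lp p e) (hne : w₁ + w₂ ≠ 0) (x : E) :
    pc p (e + w₁ + w₂) e x =
      pc p (e + w₁) e x + pc p (e + w₂) e x - pc p e e x := by
  set s := e + w₁ + w₂ with hs
  have hsc : pc p e e s = 1 := by
    rw [hs, map_add, map_add, c_e he, (c_zero_iff he).mpr hw₁,
      (c_zero_iff he).mpr hw₂, add_zero, add_zero]
  have hs0 : s ≠ 0 := chart_ne_zero hsc
  have hw1c : pc p e e (e + w₁) = 1 := by
    rw [map_add, c_e he, (c_zero_iff he).mpr hw₁, add_zero]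
  have hw2c : pc p e e (e + w₂) = 1 := by
    rw [map_add, c_e he, (c_zero_iff he).mpr hw₂, add_zero]
  have henots : e ∉ lp p s := e_not_mem_lp hdim he hsc
  -- chart case vanishing
  have hchart : ∀ v, pc p e e v = 1 → v ∈ lp p s →
      pc p (e + w₁) e v + pc p (e + w₂) e v - pc p e e v = 0 := by
    intro v hv hvs
    have hve : v ≠ e := by
      intro h; subst h; exact henots hvs
    have hsv : s ∈ lp p v := lp_symm p hdim (he0 he) hvs
    have hsv0 : pc p v e s = 0 := f_mem hdim he hv hsv
    have hts : pc p v e w₁ + pc p v e w₂ = -1 := by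
      have h1 : pc p v e s = pc p v e e + pc p v e w₁ + pc p v e w₂ := by
        rw [hs, map_add, map_add]
      rw [hsv0, f_at_e hdim he hv] at h1
      have h3 : pc p v e w₁ + pc p v e w₂ =
          1 + pc p v e w₁ + pc p v e w₂ - 1 := by abel
      rw [h3, ← h1, zero_sub]
    have hflip : ∀ w', w' ∈ lp p e → pc p e e (e + w') = 1 →
        pc p (e + w') e v = 1 + sig p e (pc p v e w') := by
      intro w' hw'e hw'c
      by_cases hw'0 : w' = 0
      · subst hw'0
        rw [add_zero, map_zero, sig_zero hdim h2 he, add_zero, hv]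
      · have hXe : e + w' ≠ e := by
          intro h
          have h' := congrArg (· - e) h
          simp only [add_sub_cancel_left, sub_self] at h'
          exact hw'0 h'
        have h1 : pc p (e + w') e v = sig p e (pc p v e (e + w')) :=
          f_flip hdim h2 he hv hw'c hXe
        rw [map_add, f_at_e hdim he hv, sig_add hdim h2 he, sig_one hdim h2 he] at h1
        exact h1
    have hv1 : pc p (e + w₁) e v = 1 + sig p e (pc p v e w₁) := hflip w₁ hw₁ hw1c
    have hv2 : pc p (e + w₂) e v = 1 + sig p e (pc p v e w₂) := hflip w₂ hw₂ hw2c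
    rw [hv1, hv2, hv]
    have hsum : sig p e (pc p v e w₁) + sig p e (pc p v e w₂) = -1 := by
      rw [← sig_add hdim h2 he, hts, sig_neg hdim h2 he, sig_one hdim h2 he]
    rw [show (1 + sig p e (pc p v e w₁)) + (1 + sig p e (pc p v e w₂)) - 1 =
      (sig p e (pc p v e w₁) + sig p e (pc p v e w₂)) + 1 from by abel, hsum]
    norm_num
  -- scaling to all v ∈ lp s with c v ≠ 0
  have hkey : ∀ v, v ∈ lp p s → pc p e e v ≠ 0 →
      pc p (e + w₁) e v + pc p (e + w₂) e v - pc p e e v = 0 := by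
    intro v hvs hcv
    have hnorm : pc p e e ((pc p e e v)⁻¹ • v) = 1 := by
      rw [map_smul, smul_eq_mul, inv_mul_cancel₀ hcv]
    have hmem : (pc p e e v)⁻¹ • v ∈ lp p s := Submodule.smul_mem _ _ hvs
    have hch := hchart _ hnorm hmem
    rw [map_smul, map_smul, map_smul, smul_eq_mul, smul_eq_mul, smul_eq_mul] at hch
    have := congrArg (fun t => pc p e e v * t) hch
    simp only [mul_zero] at this
    rw [mul_sub, mul_add, ← mul_assoc, ← mul_assoc, ← mul_assoc,
      mul_inv_cancel₀ hcv, one_mul, one_mul, one_mul] at this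
    exact this
  -- all v ∈ lp s vanish
  have hvanish : ∀ v ∈ lp p s,
      pc p (e + w₁) e v + pc p (e + w₂) e v - pc p e e v = 0 := by
    intro v hvs
    by_cases hcv : pc p e e v = 0
    · -- difference trick
      have hns : ¬ lp p s ≤ lp p e := by
        intro hle
        have h1 := lp_le_lp p hs0 (he0 he) hle
        rw [Submodule.mem_span_singleton] at h1
        obtain ⟨ρ, hρ⟩ := h1
        have hρ0 : ρ ≠ 0 := by
          rintro rfl; rw [zero_smul] at hρ; exact he0 he hρ.symm
        have hse : s = ρ⁻¹ • e := by
          rw [← hρ, smul_smul, inv_mul_cancel₀ hρ0, one_smul]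
        have : pc p e e s = ρ⁻¹ := by
          rw [hse, map_smul, c_e he, smul_eq_mul, mul_one]
        rw [hsc] at this
        have hρ1 : ρ = 1 := by
          have h4 := congrArg (fun t => ρ * t) this
          rwa [mul_one, mul_inv_cancel₀ hρ0] at h4
        rw [hρ1, inv_one, one_smul] at hse
        apply hne
        have : e + (w₁ + w₂) = e := by rw [← add_assoc, ← hs, hse]
        have h2 := congrArg (· - e) this
        simpa using h2
      have hex : ∃ v₀, v₀ ∈ lp p s ∧ v₀ ∉ lp p e := by
        by_contra hc; push_neg at hc; exact hns hc
      obtain ⟨v₀, hv₀s, hv₀e⟩ := hex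
      have hc0 : pc p e e v₀ ≠ 0 := fun h => hv₀e ((c_zero_iff he).mp h)
      have e1 := hkey (v + v₀) (add_mem hvs hv₀s)
        (by rw [map_add, hcv, zero_add]; exact hc0)
      have e2 := hkey v₀ hv₀s hc0
      rw [map_add, map_add, map_add] at e1
      have := congrArg₂ (· - ·) e1 e2
      simp only [sub_zero] at this
      rw [← this]
      abel
    · exact hkey v hvs hcv
  -- decompose x over lp s ⊕ span e
  have hxsup : x ∈ lp p s ⊔ Submodule.span K {e} := by
    rw [sup_line_eq_top p hs0 henots]; trivial
  rw [Submodule.mem_sup] at hxsup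
  obtain ⟨h, hh, z, hz, hxdec⟩ := hxsup
  rw [Submodule.mem_span_singleton] at hz
  obtain ⟨ρ, rfl⟩ := hz
  have hLh : pc p s e h = 0 := f_mem hdim he hsc hh
  have hRh := hvanish h hh
  rw [← hxdec]
  simp only [map_add, map_smul, smul_eq_mul, hLh, f_at_e hdim he hsc,
    f_at_e hdim he hw1c, f_at_e hdim he hw2c, c_e he, mul_one, zero_add]
  rw [show pc p (e + w₁) e h + ρ + (pc p (e + w₂) e h + ρ) - (pc p e e h + ρ) =
    (pc p (e + w₁) e h + pc p (e + w₂) e h - pc p e e h) + ρ from by abel, hRh,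
    zero_add]

end BvN

namespace BvN
open Submodule

variable {K E : Type*} [DivisionRing K] [AddCommGroup E] [Module K E]
variable {p : Polarity K E} {e : E}

/-- component of `y` in `e^⊥`. -/
noncomputable def piv (p : Polarity K E) (e : E) (y : E) : E := y - pc p e e y • e

/-- the hermitian form induced by the polarity. -/
noncomputable def Bform (p : Polarity K E) (e : E) (x y : E) : K :=
  pc p (e + piv p e y) e x - pc p e e x + pc p e e x * sig p e (pc p e e y)

theorem piv_mem (he : e ∉ lp p e) (y : E) : piv p e y ∈ lp p e := by
  rw [← c_zero_iff he, piv, map_sub, map_smul, c_e he, smul_eq_mul, mul_one, sub_self]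

theorem c_e_piv (he : e ∉ lp p e) (y : E) : pc p e e (e + piv p e y) = 1 := by
  rw [map_add, c_e he, (c_zero_iff he).mpr (piv_mem he y), add_zero]

theorem piv_e (he : e ∉ lp p e) : piv p e e = 0 := by
  rw [piv, c_e he, one_smul, sub_self]

theorem piv_zero : piv p e 0 = 0 := by
  rw [piv, map_zero, zero_smul, sub_zero]

theorem piv_add (y z : E) : piv p e (y + z) = piv p e y + piv p e z := by
  simp only [piv, map_add, add_smul]
  abel

theorem piv_smul (ρ : K) (y : E) : piv p e (ρ • y) = ρ • piv p e y := by
  simp only [piv, map_smul, smul_eq_mul, smul_sub, mul_smul]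

theorem eq_c_smul_add_piv (x : E) : x = pc p e e x • e + piv p e x := by
  rw [piv]; abel

theorem Bform_add_left (x x' y : E) :
    Bform p e (x + x') y = Bform p e x y + Bform p e x' y := by
  simp only [Bform, map_add]
  rw [add_mul]
  abel

theorem Bform_smul_left (ρ : K) (x y : E) :
    Bform p e (ρ • x) y = ρ * Bform p e x y := by
  simp only [Bform, map_smul, smul_eq_mul]
  rw [mul_add, mul_sub, ← mul_assoc]

theorem Bform_zero_right (hdim : 3 ≤ Module.rank K E) (h2 : (2 : K) ≠ 0)
    (he : e ∉ lp p e) (x : E) : Bform p e x 0 = 0 := by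
  rw [Bform, piv_zero, add_zero, map_zero, sig_zero hdim h2 he, mul_zero,
    sub_self, zero_add]

theorem Bform_add_right (hdim : 3 ≤ Module.rank K E) (h2 : (2 : K) ≠ 0)
    (he : e ∉ lp p e) (x y z : E) :
    Bform p e x (y + z) = Bform p e x y + Bform p e x z := by
  by_cases hne : piv p e y + piv p e z = 0
  · have hne' := hne
    rw [add_comm] at hne'
    have hpz : piv p e z = -piv p e y := add_eq_zero_iff_eq_neg.mp hne'
    rw [Bform, Bform, Bform, piv_add, hne, add_zero, sub_self, hpz,
      ← sub_eq_add_neg, claimM_neg hdim h2 he (piv_mem he y) x,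
      map_add, sig_add hdim h2 he, mul_add]
    abel
  · rw [Bform, Bform, Bform, piv_add, ← add_assoc, claimA hdim h2 he
      (piv_mem he y) (piv_mem he z) hne x, map_add, sig_add hdim h2 he, mul_add]
    abel

theorem Bform_smul_right (hdim : 3 ≤ Module.rank K E) (h2 : (2 : K) ≠ 0)
    (he : e ∉ lp p e) (ρ : K) (x y : E) :
    Bform p e x (ρ • y) = Bform p e x y * sig p e ρ := by
  rw [Bform, Bform, piv_smul, map_smul, smul_eq_mul, sig_mul hdim h2 he, add_mul,
    ← claimM hdim h2 he (piv_mem he y) ρ x, mul_assoc]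

theorem Bform_eq (hdim : 3 ≤ Module.rank K E) (h2 : (2 : K) ≠ 0) (he : e ∉ lp p e)
    (x y : E) :
    Bform p e x y = pc p (e + piv p e y) e (piv p e x)
      + pc p e e x * sig p e (pc p e e y) := by
  have hx2 : x = pc p e e x • e + piv p e x := eq_c_smul_add_piv x
  have h1 : pc p (e + piv p e y) e x =
      pc p e e x + pc p (e + piv p e y) e (piv p e x) := by
    conv_lhs => rw [hx2]
    rw [map_add, map_smul, f_at_e hdim he (c_e_piv he y), smul_eq_mul, mul_one]
  rw [Bform, h1]
  abel

/-- symmetry on `e^⊥`. -/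
theorem symm_perp (hdim : 3 ≤ Module.rank K E) (h2 : (2 : K) ≠ 0) (he : e ∉ lp p e)
    {w₁ w₂ : E} (hw₁ : w₁ ∈ lp p e) (hw₂ : w₂ ∈ lp p e) :
    sig p e (pc p (e + w₂) e w₁) = pc p (e + w₁) e w₂ := by
  by_cases hw₂0 : w₂ = 0
  · subst hw₂0
    rw [add_zero, (c_zero_iff he).mpr hw₁, sig_zero hdim h2 he, map_zero]
  have h2c : pc p e e (e + w₂) = 1 := by
    rw [map_add, c_e he, (c_zero_iff he).mpr hw₂, add_zero]
  have h1c : pc p e e (e + w₁) = 1 := by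
    rw [map_add, c_e he, (c_zero_iff he).mpr hw₁, add_zero]
  have hXe : e + w₂ ≠ e := by
    intro h
    have h' := congrArg (· - e) h
    simp only [add_sub_cancel_left, sub_self] at h'
    exact hw₂0 h'
  have h1 := sig_spec hdim h2 he h1c h2c hXe
  rw [map_add, f_at_e hdim he h2c, sig_add hdim h2 he, sig_one hdim h2 he,
    map_add, f_at_e hdim he h1c] at h1
  have h3 : sig p e (pc p (e + w₂) e w₁) + 1 = pc p (e + w₁) e w₂ + 1 := by
    rw [show sig p e (pc p (e+w₂) e w₁) + 1 = 1 + sig p e (pc p (e+w₂) e w₁) from by abel,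
      h1]
    abel
  exact add_right_cancel h3

theorem Bform_symm (hdim : 3 ≤ Module.rank K E) (h2 : (2 : K) ≠ 0) (he : e ∉ lp p e)
    (x y : E) : sig p e (Bform p e x y) = Bform p e y x := by
  rw [Bform_eq hdim h2 he, Bform_eq hdim h2 he, sig_add hdim h2 he,
    symm_perp hdim h2 he (piv_mem he x) (piv_mem he y),
    sig_mul hdim h2 he, sig_invol hdim h2 he]

theorem Bform_e_right (hdim : 3 ≤ Module.rank K E) (h2 : (2 : K) ≠ 0)
    (he : e ∉ lp p e) (m : E) : Bform p e e m = sig p e (pc p e e m) := by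
  rw [Bform_eq hdim h2 he, piv_e he, map_zero, zero_add, c_e he, one_mul]

theorem Bform_e_left (hdim : 3 ≤ Module.rank K E) (h2 : (2 : K) ≠ 0)
    (he : e ∉ lp p e) (x : E) : Bform p e x e = pc p e e x := by
  rw [Bform, piv_e he, add_zero, c_e he, sig_one hdim h2 he, mul_one]
  abel

/-- vanishing half of the orthogonality correspondence. -/
theorem Bform_vanish (hdim : 3 ≤ Module.rank K E) (h2 : (2 : K) ≠ 0) (he : e ∉ lp p e)
    {m : E} (hm0 : m ≠ 0) {v : E} (hv : v ∈ lp p m) : Bform p e v m = 0 := by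
  have hchart : ∀ u, pc p e e u = 1 → u ∈ lp p m → Bform p e u m = 0 := by
    intro u hu hum
    by_cases hue : u = e
    · rw [hue, Bform_e_right hdim h2 he]
      have hme : m ∈ lp p e := lp_symm p hdim (he0 he) (hue ▸ hum)
      rw [(c_zero_iff he).mpr hme, sig_zero hdim h2 he]
    · by_cases hpm : piv p e m = 0
      · -- m = c m • e with c m ≠ 0, so lp m = lp e : contradiction with u chart
        exfalso
        have hmeq : m = pc p e e m • e := by
          have := eq_c_smul_add_piv (p := p) (e := e) m
          rw [hpm, add_zero] at this
          exact this
        have hcm0 : pc p e e m ≠ 0 := by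
          intro h; rw [h, zero_smul] at hmeq; exact hm0 hmeq
        have : lp p m = lp p e := by rw [hmeq, lp_smul p hcm0]
        rw [this] at hum
        exact chart_not_mem he hu hum
      · have hXc : pc p e e (e + piv p e m) = 1 := c_e_piv he m
        have hXe : e + piv p e m ≠ e := by
          intro h
          have h' := congrArg (· - e) h
          simp only [add_sub_cancel_left, sub_self] at h'
          exact hpm h'
        have hmu : m ∈ lp p u := lp_symm p hdim (he0 he) hum
        have hval : pc p u e (e + piv p e m) = 1 - pc p e e m := by
          rw [piv, map_add, f_at_e hdim he hu, map_sub, map_smul,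
            f_at_e hdim he hu, f_mem hdim he hu hmu, smul_eq_mul, mul_one]
          abel
        have hflip : pc p (e + piv p e m) e u = sig p e (pc p u e (e + piv p e m)) :=
          f_flip hdim h2 he hu hXc hXe
        rw [hval, sig_sub hdim h2 he, sig_one hdim h2 he] at hflip
        rw [Bform, hflip, hu, one_mul]
        abel
  by_cases hcv : pc p e e v = 0
  · -- v ∈ e^⊥ : direct membership argument
    have hve : v ∈ lp p e := (c_zero_iff he).mp hcv
    have h1 : e ∈ lp p v := lp_symm p hdim (he0 he) hve
    have h2' : m ∈ lp p v := lp_symm p hdim (he0 he) hv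
    have h3 : e + piv p e m ∈ lp p v := by
      rw [piv]
      exact add_mem h1 (sub_mem h2' (smul_mem _ _ h1))
    have h4 : v ∈ lp p (e + piv p e m) := lp_symm p hdim (he0 he) h3
    rw [Bform, hcv, sub_zero, zero_mul, add_zero]
    exact f_mem hdim he (c_e_piv he m) h4
  · have hnorm : pc p e e ((pc p e e v)⁻¹ • v) = 1 := by
      rw [map_smul, smul_eq_mul, inv_mul_cancel₀ hcv]
    have hmem : (pc p e e v)⁻¹ • v ∈ lp p m := Submodule.smul_mem _ _ hv
    have h0 := hchart _ hnorm hmem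
    rw [Bform_smul_left] at h0
    rcases mul_eq_zero.mp h0 with h' | h'
    · exact absurd h' (inv_ne_zero hcv)
    · exact h'

/-- full orthogonality correspondence. -/
theorem Bform_orth (hdim : 3 ≤ Module.rank K E) (h2 : (2 : K) ≠ 0) (he : e ∉ lp p e)
    {m : E} (hm0 : m ≠ 0) (x : E) : Bform p e x m = 0 ↔ x ∈ lp p m := by
  constructor
  swap
  · exact Bform_vanish hdim h2 he hm0
  intro hB
  by_cases hcm : pc p e e m = 0
  · -- m ∈ e^⊥
    have hme : m ∈ lp p e := (c_zero_iff he).mp hcm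
    have hpm : piv p e m = m := by rw [piv, hcm, zero_smul, sub_zero]
    -- find a with Bform a m ≠ 0
    have hex : ∃ a, pc p (e + m) e a ≠ pc p e e a := by
      by_contra hc
      push_neg at hc
      have hm1c : pc p e e (e + m) = 1 := by
        rw [map_add, c_e he, (c_zero_iff he).mpr hme, add_zero]
      have hem0 : e + m ≠ 0 := chart_ne_zero hm1c
      have hlpeq : lp p (e + m) = lp p e := by
        apply le_antisymm
        · intro z hz
          rw [← c_zero_iff he, ← hc z]
          exact f_mem hdim he hm1c hz
        · intro z hz
          rw [← f_zero_iff hdim he hm1c, hc z]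
          exact (c_zero_iff he).mpr hz
      have h1 := lp_le_lp p hem0 (he0 he) (le_of_eq hlpeq)
      rw [Submodule.mem_span_singleton] at h1
      obtain ⟨τ, hτ⟩ := h1
      -- e = τ • (e + m) ... derive e + m = τ⁻¹ • e, so m ∈ span e ∩ lp e, m ≠ 0 → contra
      have hτ0 : τ ≠ 0 := by
        rintro rfl; rw [zero_smul] at hτ; exact he0 he hτ.symm
      have hem : e + m = τ⁻¹ • e := by
        have h5 := congrArg (fun t : E => τ⁻¹ • t) hτ
        simpa [smul_smul, inv_mul_cancel₀ hτ0] using h5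
      have hceq : pc p e e (e + m) = τ⁻¹ := by
        rw [hem, map_smul, c_e he, smul_eq_mul, mul_one]
      rw [hm1c] at hceq
      have hτ1 : τ = 1 := by
        have h4 := congrArg (fun t => τ * t) hceq
        rwa [mul_one, mul_inv_cancel₀ hτ0] at h4
      rw [hτ1, inv_one, one_smul] at hem
      apply hm0
      have := congrArg (· - e) hem
      simpa using this
    obtain ⟨a, ha⟩ := hex
    have hBa : Bform p e a m ≠ 0 := by
      rw [Bform, hpm, hcm, sig_zero hdim h2 he, mul_zero, add_zero, sub_ne_zero]
      exact ha
    have ham : a ∉ lp p m := fun h => hBa (Bform_vanish hdim h2 he hm0 h)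
    have hxsup : x ∈ lp p m ⊔ Submodule.span K {a} := by
      rw [sup_line_eq_top p hm0 ham]; trivial
    rw [Submodule.mem_sup] at hxsup
    obtain ⟨h, hh, z, hz, hxdec⟩ := hxsup
    rw [Submodule.mem_span_singleton] at hz
    obtain ⟨ρ, rfl⟩ := hz
    have hexp : Bform p e x m = ρ * Bform p e a m := by
      rw [← hxdec, Bform_add_left, Bform_smul_left,
        Bform_vanish hdim h2 he hm0 hh, zero_add]
    rw [hB] at hexp
    have hρ0 : ρ = 0 := by
      rcases mul_eq_zero.mp hexp.symm with h' | h'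
      · exact h'
      · exact absurd h' hBa
    rw [← hxdec, hρ0, zero_smul, add_zero]
    exact hh
  · -- c m ≠ 0 : use e as complement point
    have hem : e ∉ lp p m := by
      intro hmem
      exact hcm ((c_zero_iff he).mpr (lp_symm p hdim (he0 he) hmem))
    have hBe : Bform p e e m ≠ 0 := by
      rw [Bform_e_right hdim h2 he]
      intro h
      apply hcm
      apply sig_inj hdim h2 he
      rw [h, sig_zero hdim h2 he]
    have hxsup : x ∈ lp p m ⊔ Submodule.span K {e} := by
      rw [sup_line_eq_top p hm0 hem]; trivial
    rw [Submodule.mem_sup] at hxsup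
    obtain ⟨h, hh, z, hz, hxdec⟩ := hxsup
    rw [Submodule.mem_span_singleton] at hz
    obtain ⟨ρ, rfl⟩ := hz
    have hexp : Bform p e x m = ρ * Bform p e e m := by
      rw [← hxdec, Bform_add_left, Bform_smul_left,
        Bform_vanish hdim h2 he hm0 hh, zero_add]
    rw [hB] at hexp
    have hρ0 : ρ = 0 := by
      rcases mul_eq_zero.mp hexp.symm with h' | h'
      · exact h'
      · exact absurd h' hBe
    rw [← hxdec, hρ0, zero_smul, add_zero]
    exact hh

theorem Bform_nondeg (hdim : 3 ≤ Module.rank K E) (h2 : (2 : K) ≠ 0) (he : e ∉ lp p e)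
    {a : E} (ha : ∀ z : E, Bform p e a z = 0) : a = 0 := by
  by_contra ha0
  have hca : pc p e e a = 0 := by
    have := ha e
    rwa [Bform_e_left hdim h2 he] at this
  have hae : a ∈ lp p e := (c_zero_iff he).mp hca
  have hmem : ∀ w, w ∈ lp p e → a ∈ lp p (e + w) := by
    intro w hw
    have := ha w
    rw [Bform, hca, sub_zero, zero_mul, add_zero] at this
    have hpw : piv p e w = w := by
      rw [piv, (c_zero_iff he).mpr hw, zero_smul, sub_zero]
    rw [hpw] at this
    exact (f_zero_iff hdim he (by
      rw [map_add, c_e he, (c_zero_iff he).mpr hw, add_zero])).mp this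
  have hsup : lp p e ⊔ Submodule.span K {e} ≤ lp p a := by
    apply sup_le
    · intro w hw
      have h1 : e + w ∈ lp p a := lp_symm p hdim (he0 he) (hmem w hw)
      have h2' : e ∈ lp p a := lp_symm p hdim (he0 he) hae
      have := sub_mem h1 h2'
      simpa using this
    · rw [Submodule.span_singleton_le_iff_mem]
      exact lp_symm p hdim (he0 he) hae
  rw [sup_line_eq_top p (he0 he) he] at hsup
  exact lp_ne_top p ha0 (top_unique hsup)

end BvN

open BvN in
/-- **Birkhoff–von Neumann, Hermitian case.** If `char K ≠ 2`, `dim E ≥ 3`, and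
some point `Ke` is not isotropic for the polarity, then the polarity is induced
by a nondegenerate Hermitian form with respect to some involution on `K`. -/
theorem birkhoff_vonNeumann_hermitian {K E : Type*} [DivisionRing K] [AddCommGroup E]
    [Module K E] (p : Polarity K E) (h2 : (2 : K) ≠ 0) (hdim : 3 ≤ Module.rank K E)
    (e : E) (he : e ∉ p.perp (Submodule.span K {e})) :
    ∃ (σ : K → K) (B : E → E → K),
      (∀ a b : K, σ (a + b) = σ a + σ b) ∧
      (∀ a b : K, σ (a * b) = σ b * σ a) ∧
      (∀ a : K, σ (σ a) = a) ∧
      (∀ x y z : E, B (x + y) z = B x z + B y z) ∧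
      (∀ x y z : E, B x (y + z) = B x y + B x z) ∧
      (∀ (ρ : K) (x y : E), B (ρ • x) y = ρ * B x y) ∧
      (∀ (ρ : K) (x y : E), B x (ρ • y) = B x y * σ ρ) ∧
      (∀ x y : E, σ (B x y) = B y x) ∧
      (∀ a : E, (∀ x : E, B a x = 0) → a = 0) ∧
      (∀ M : Submodule K E, (p.perp M : Set E) = {x : E | ∀ m ∈ M, B x m = 0}) := by
  have he' : e ∉ lp p e := he
  refine ⟨sig p e, fun x y => Bform p e x y, ?_, ?_, ?_, ?_, ?_, ?_, ?_, ?_, ?_, ?_⟩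
  · exact sig_add hdim h2 he'
  · exact fun a b => sig_mul hdim h2 he' a b
  · exact sig_invol hdim h2 he'
  · exact fun x y z => Bform_add_left x y z
  · exact fun x y z => Bform_add_right hdim h2 he' x y z
  · exact fun ρ x y => Bform_smul_left ρ x y
  · exact fun ρ x y => Bform_smul_right hdim h2 he' ρ x y
  · exact fun x y => Bform_symm hdim h2 he' x y
  · exact fun a ha => Bform_nondeg hdim h2 he' ha
  · intro M
    ext x
    simp only [SetLike.mem_coe, Set.mem_setOf_eq]
    constructor
    · intro hx m hm
      rcases eq_or_ne m 0 with rfl | hm0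
      · exact Bform_zero_right hdim h2 he' x
      · have h1 : Submodule.span K {m} ≤ M :=
          (Submodule.span_singleton_le_iff_mem _ _).mpr hm
        have h2' : p.perp M ≤ lp p m := p.perp_antitone h1
        exact (Bform_orth hdim h2 he' hm0 x).mpr (h2' hx)
    · intro hB
      rcases eq_or_ne x 0 with rfl | hx0
      · exact zero_mem _
      · have hMle : M ≤ lp p x := by
          intro m hm
          rcases eq_or_ne m 0 with rfl | hm0
          · exact zero_mem _
          · exact lp_symm p hdim (he0 he') ((Bform_orth hdim h2 he' hm0 x).mp (hB m hm))
        have h3 : p.perp (lp p x) ≤ p.perp M := p.perp_antitone hMle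
        apply h3
        show x ∈ p.perp (p.perp (Submodule.span K {x}))
        rw [p.line_biperp x hx0]
        exact Submodule.mem_span_singleton_self x
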